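/- Let K be an n×n symmetric positive definite real matrix with K = K^{1/2} K^{1/2}. For X, Y ∈ ℝ^{n×m}, a minimizer over rank-k matrices M of the weighted Frobenius norm ‖K^{1/2}(Y − M X)‖_F is M_k⋆ = (K^{1/2})^{-1} P'_k K^{1/2} Y X†, where P'_k is the orthogonal projector onto the span of the top k left singular vectors of Z' = K^{1/2} Y X† X. -/

import Mathlib

open Matrix

noncomputable section

/-- `Xd` is the Moore–Penrose pseudoinverse of `X` (the four Penrose conditions). -/
def IsMoorePenrose {n m : ℕ} (X : Matrix (Fin n) (Fin m) ℝ)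
    (Xd : Matrix (Fin m) (Fin n) ℝ) : Prop :=
  X * Xd * X = X ∧ Xd * X * Xd = Xd ∧ (X * Xd)ᵀ = X * Xd ∧ (Xd * X)ᵀ = Xd * X

/-- Squared Frobenius norm. -/
def frobSq {n m : ℕ} (A : Matrix (Fin n) (Fin m) ℝ) : ℝ := ∑ i, ∑ j, (A i j) ^ 2

/-- Frobenius norm. -/
def frob {n m : ℕ} (A : Matrix (Fin n) (Fin m) ℝ) : ℝ := Real.sqrt (frobSq A)

/-- Rectangular diagonal matrix with entries `σ 0, σ 1, …` on the diagonal. -/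
def rdiag (n m : ℕ) (σ : ℕ → ℝ) : Matrix (Fin n) (Fin m) ℝ :=
  Matrix.of fun i j => if (i : ℕ) = (j : ℕ) then σ (i : ℕ) else 0

/-- Rectangular diagonal matrix truncated to its first `k` diagonal entries. -/
def rdiagTrunc (n m k : ℕ) (σ : ℕ → ℝ) : Matrix (Fin n) (Fin m) ℝ :=
  Matrix.of fun i j => if (i : ℕ) = (j : ℕ) ∧ (i : ℕ) < k then σ (i : ℕ) else 0

/-- Diagonal projector onto the first `k` coordinates. -/
def dproj (n k : ℕ) : Matrix (Fin n) (Fin n) ℝ :=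
  Matrix.of fun i j => if i = j ∧ (i : ℕ) < k then (1 : ℝ) else 0

/-- `A = U * rdiag σ * Vᵀ` is a singular value decomposition of `A`:
`U`, `V` are orthogonal and the singular values `σ` are nonnegative and nonincreasing. -/
def IsSVDecomp {n m : ℕ} (A : Matrix (Fin n) (Fin m) ℝ) (U : Matrix (Fin n) (Fin n) ℝ)
    (V : Matrix (Fin m) (Fin m) ℝ) (σ : ℕ → ℝ) : Prop :=
  U * Uᵀ = 1 ∧ Uᵀ * U = 1 ∧ V * Vᵀ = 1 ∧ Vᵀ * V = 1 ∧
  (∀ i, 0 ≤ σ i) ∧ (∀ i j, i ≤ j → σ j ≤ σ i) ∧ (∀ i, min n m ≤ i → σ i = 0) ∧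
  A = U * rdiag n m σ * Vᵀ

namespace WLRMaux

variable {n m : ℕ}

lemma frobSq_nonneg (A : Matrix (Fin n) (Fin m) ℝ) : 0 ≤ frobSq A :=
  Finset.sum_nonneg fun _ _ => Finset.sum_nonneg fun _ _ => sq_nonneg _

lemma frob_le_frob {A B : Matrix (Fin n) (Fin m) ℝ} (h : frobSq A ≤ frobSq B) :
    frob A ≤ frob B := Real.sqrt_le_sqrt h

lemma frobSq_eq_trace (A : Matrix (Fin n) (Fin m) ℝ) : frobSq A = (Aᵀ * A).trace := by
  rw [frobSq, Matrix.trace, Finset.sum_comm]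
  refine Finset.sum_congr rfl fun j _ => ?_
  simp [Matrix.diag_apply, Matrix.mul_apply, sq]

lemma frobSq_eq_trace' (A : Matrix (Fin n) (Fin m) ℝ) : frobSq A = (A * Aᵀ).trace := by
  rw [frobSq_eq_trace, Matrix.trace_mul_comm]

lemma frobSq_proj_left (P : Matrix (Fin n) (Fin n) ℝ) (hs : Pᵀ = P) (hi : P * P = P)
    (W : Matrix (Fin n) (Fin m) ℝ) : frobSq (P * W) = (Wᵀ * (P * W)).trace := by
  rw [frobSq_eq_trace, Matrix.transpose_mul, hs]
  rw [Matrix.mul_assoc, ← Matrix.mul_assoc P P W, hi]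

lemma pyth_left (P : Matrix (Fin n) (Fin n) ℝ) (hs : Pᵀ = P) (hi : P * P = P)
    (W : Matrix (Fin n) (Fin m) ℝ) :
    frobSq W = frobSq (P * W) + frobSq ((1 - P) * W) := by
  have hs' : (1 - P)ᵀ = 1 - P := by rw [Matrix.transpose_sub, Matrix.transpose_one, hs]
  have hi' : (1 - P) * (1 - P) = 1 - P := by
    rw [Matrix.sub_mul, Matrix.one_mul, Matrix.mul_sub, hi, Matrix.mul_one]
    abel
  rw [frobSq_proj_left P hs hi, frobSq_proj_left _ hs' hi', frobSq_eq_trace]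
  rw [← Matrix.trace_add, ← Matrix.mul_add]
  congr 2
  rw [Matrix.sub_mul, Matrix.one_mul]
  abel

lemma frobSq_proj_right (Q : Matrix (Fin m) (Fin m) ℝ) (hs : Qᵀ = Q) (hi : Q * Q = Q)
    (W : Matrix (Fin n) (Fin m) ℝ) : frobSq (W * Q) = ((W * Q) * Wᵀ).trace := by
  rw [frobSq_eq_trace', Matrix.transpose_mul, hs]
  rw [Matrix.mul_assoc W Q _, ← Matrix.mul_assoc Q Q Wᵀ, hi, ← Matrix.mul_assoc]

lemma pyth_right (Q : Matrix (Fin m) (Fin m) ℝ) (hs : Qᵀ = Q) (hi : Q * Q = Q)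
    (W : Matrix (Fin n) (Fin m) ℝ) :
    frobSq W = frobSq (W * Q) + frobSq (W * (1 - Q)) := by
  have hs' : (1 - Q)ᵀ = 1 - Q := by rw [Matrix.transpose_sub, Matrix.transpose_one, hs]
  have hi' : (1 - Q) * (1 - Q) = 1 - Q := by
    rw [Matrix.sub_mul, Matrix.one_mul, Matrix.mul_sub, hi, Matrix.mul_one]
    abel
  rw [frobSq_proj_right Q hs hi, frobSq_proj_right _ hs' hi', frobSq_eq_trace']
  rw [← Matrix.trace_add, ← Matrix.add_mul]
  congr 2
  rw [Matrix.mul_sub, Matrix.mul_one]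
  abel

lemma frobSq_mul_orth_left (U : Matrix (Fin n) (Fin n) ℝ) (hU : Uᵀ * U = 1)
    (A : Matrix (Fin n) (Fin m) ℝ) : frobSq (U * A) = frobSq A := by
  rw [frobSq_eq_trace, frobSq_eq_trace, Matrix.transpose_mul, Matrix.mul_assoc,
    ← Matrix.mul_assoc Uᵀ U A, hU, Matrix.one_mul]

lemma frobSq_mul_orth_right (V : Matrix (Fin m) (Fin m) ℝ) (hV : V * Vᵀ = 1)
    (A : Matrix (Fin n) (Fin m) ℝ) : frobSq (A * V) = frobSq A := by
  rw [frobSq_eq_trace', frobSq_eq_trace', Matrix.transpose_mul, Matrix.mul_assoc,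
    ← Matrix.mul_assoc V Vᵀ Aᵀ, hV, Matrix.one_mul]

lemma exists_proj (k : ℕ) (B : Matrix (Fin n) (Fin m) ℝ) (hB : B.rank ≤ k) :
    ∃ P : Matrix (Fin n) (Fin n) ℝ, Pᵀ = P ∧ P * P = P ∧ P * B = B ∧ P.trace ≤ (k : ℝ) := by
  classical
  set e := (WithLp.linearEquiv 2 ℝ (Fin n → ℝ)).symm with he
  set V : Submodule ℝ (EuclideanSpace ℝ (Fin n)) :=
    Submodule.map (e : (Fin n → ℝ) →ₗ[ℝ] EuclideanSpace ℝ (Fin n)) (LinearMap.range B.mulVecLin) with hV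
  have hrank : Module.finrank ℝ V = B.rank := e.finrank_map_eq _
  set r := Module.finrank ℝ V with hr
  set b := stdOrthonormalBasis ℝ V with hb
  set w : Fin r → (Fin n → ℝ) := fun l => ((b l : EuclideanSpace ℝ (Fin n)) : Fin n → ℝ) with hwdef
  have hw : ∀ l l', ∑ i, w l i * w l' i = if l = l' then 1 else 0 := by
    intro l l'
    have h := b.orthonormal
    rw [orthonormal_iff_ite] at h
    have h2 := h l l'
    rw [Submodule.coe_inner, PiLp.inner_apply] at h2
    refine Eq.trans (Finset.sum_congr rfl fun i _ => mul_comm _ _) ?_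
    simpa using h2
  have key : ∀ (x : V) (i : Fin n), (x : EuclideanSpace ℝ (Fin n)) i
      = ∑ l, (∑ j, w l j * (x : EuclideanSpace ℝ (Fin n)) j) * w l i := by
    intro x i
    have hx := b.sum_repr x
    have hx2 : ((∑ l, b.repr x l • b l : V) : EuclideanSpace ℝ (Fin n)) i
        = (x : EuclideanSpace ℝ (Fin n)) i := by rw [hx]
    rw [← hx2]
    push_cast
    rw [WithLp.ofLp_sum, Finset.sum_apply]
    refine Finset.sum_congr rfl fun l _ => ?_
    rw [WithLp.ofLp_smul, Pi.smul_apply, smul_eq_mul, b.repr_apply_apply, Submodule.coe_inner, PiLp.inner_apply]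
    simp only [RCLike.inner_apply, conj_trivial, w]
    exact congrArg (· * _) (Finset.sum_congr rfl fun j _ => mul_comm _ _)
  refine ⟨Matrix.of fun i j => ∑ l, w l i * w l j, ?_, ?_, ?_, ?_⟩
  · ext i j
    simp only [transpose_apply, of_apply]
    exact Finset.sum_congr rfl fun l _ => mul_comm _ _
  · ext i j
    simp only [mul_apply, of_apply]
    have step1 : ∀ t : Fin n, (∑ l, w l i * w l t) * (∑ l', w l' t * w l' j)
        = ∑ l, ∑ l', (w l i * w l' j) * (w l t * w l' t) := by
      intro t
      rw [Finset.sum_mul]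
      refine Finset.sum_congr rfl fun l _ => ?_
      rw [Finset.mul_sum]
      exact Finset.sum_congr rfl fun l' _ => by ring
    rw [Finset.sum_congr rfl fun t _ => step1 t, Finset.sum_comm]
    have step2 : ∀ l : Fin r, ∑ t, ∑ l', (w l i * w l' j) * (w l t * w l' t)
        = w l i * w l j := by
      intro l
      rw [Finset.sum_comm]
      have h3 : ∀ l' : Fin r, ∑ t, (w l i * w l' j) * (w l t * w l' t)
          = (w l i * w l' j) * (if l = l' then 1 else 0) := by
        intro l'
        rw [← hw l l', Finset.mul_sum]
      rw [Finset.sum_congr rfl fun l' _ => h3 l']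
      rw [Finset.sum_eq_single l]
      · rw [if_pos rfl, mul_one]
      · intro l' _ hne; rw [if_neg (fun h => hne h.symm), mul_zero]
      · intro h; exact absurd (Finset.mem_univ l) h
    exact Finset.sum_congr rfl fun l _ => step2 l
  · ext i j
    simp only [mul_apply, of_apply]
    have hmem : e (B *ᵥ Pi.single j 1) ∈ V :=
      ⟨B *ᵥ Pi.single j 1, ⟨Pi.single j 1, rfl⟩, rfl⟩
    set x : V := ⟨e (B *ᵥ Pi.single j 1), hmem⟩ with hx
    have hcol : ∀ t, B t j = (x : EuclideanSpace ℝ (Fin n)) t := by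
      intro t
      show B t j = (B *ᵥ Pi.single j 1) t
      simp [Matrix.mulVec_single]
    have step1 : ∀ t : Fin n, (∑ l, w l i * w l t) * B t j
        = ∑ l, (w l t * (x : EuclideanSpace ℝ (Fin n)) t) * w l i := by
      intro t
      rw [hcol t, Finset.sum_mul]
      exact Finset.sum_congr rfl fun l _ => by ring
    rw [Finset.sum_congr rfl fun t _ => step1 t, Finset.sum_comm]
    calc ∑ l, ∑ t, (w l t * (x : EuclideanSpace ℝ (Fin n)) t) * w l i
        = ∑ l, (∑ t, w l t * (x : EuclideanSpace ℝ (Fin n)) t) * w l i :=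
          Finset.sum_congr rfl fun l _ => (Finset.sum_mul _ _ _).symm
      _ = (x : EuclideanSpace ℝ (Fin n)) i := (key x i).symm
      _ = B i j := (hcol i).symm
  · have htr : Matrix.trace (Matrix.of fun i j => ∑ l, w l i * w l j) = (r : ℝ) := by
      rw [Matrix.trace]
      simp only [Matrix.diag_apply, of_apply]
      rw [Finset.sum_comm]
      have h4 : ∀ l : Fin r, ∑ i, w l i * w l i = 1 := fun l => by rw [hw, if_pos rfl]
      rw [Finset.sum_congr rfl fun l _ => h4 l]
      simp
    rw [htr]
    exact_mod_cast (hrank ▸ hB : r ≤ k)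

lemma major {k : ℕ} (s t : Fin n → ℝ) (hs : ∀ i, 0 ≤ s i)
    (hmono : ∀ i j : Fin n, i ≤ j → s j ≤ s i)
    (ht0 : ∀ i, 0 ≤ t i) (ht1 : ∀ i, t i ≤ 1) (htsum : ∑ i, t i ≤ (k : ℝ)) :
    ∑ i, t i * s i ≤ ∑ i ∈ Finset.univ.filter (fun i : Fin n => (i : ℕ) < k), s i := by
  rcases le_or_gt n k with hnk | hkn
  · have hfil : Finset.univ.filter (fun i : Fin n => (i : ℕ) < k) = Finset.univ := by
      ext i; simp [lt_of_lt_of_le i.isLt hnk]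
    rw [hfil]
    exact Finset.sum_le_sum fun i _ => by
      calc t i * s i ≤ 1 * s i := mul_le_mul_of_nonneg_right (ht1 i) (hs i)
        _ = s i := one_mul _
  · set c := s ⟨k, hkn⟩ with hc
    have hc0 : 0 ≤ c := hs _
    set F := Finset.univ.filter (fun i : Fin n => (i : ℕ) < k) with hF
    have hcard : F.card = k := by
      have e : F = Finset.Iio (⟨k, hkn⟩ : Fin n) := by ext i; simp [hF, Fin.lt_def]
      rw [e, Fin.card_Iio]
    have hsplit : ∑ i, t i * s i = ∑ i ∈ F, t i * s i + ∑ i ∈ Fᶜ, t i * s i :=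
      (Finset.sum_add_sum_compl F _).symm
    have htsplit : ∑ i ∈ F, t i + ∑ i ∈ Fᶜ, t i = ∑ i, t i :=
      Finset.sum_add_sum_compl F _
    have h1 : ∑ i ∈ Fᶜ, t i * s i ≤ c * ∑ i ∈ Fᶜ, t i := by
      rw [Finset.mul_sum]
      refine Finset.sum_le_sum fun i hi => ?_
      have hik : k ≤ (i : ℕ) := by
        simp [hF, Finset.mem_compl, Finset.mem_filter] at hi
        omega
      have hsc : s i ≤ c := hmono ⟨k, hkn⟩ i (by simpa [Fin.le_def] using hik)
      calc t i * s i ≤ t i * c := mul_le_mul_of_nonneg_left hsc (ht0 i)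
        _ = c * t i := mul_comm _ _
    have h2 : ∑ i ∈ F, t i * s i ≤ ∑ i ∈ F, s i - c * ((k : ℝ) - ∑ i ∈ F, t i) := by
      have hterm : ∀ i ∈ F, t i * s i ≤ s i - c * (1 - t i) := by
        intro i hi
        have hik : (i : ℕ) ≤ k := by
          simp [hF, Finset.mem_filter] at hi; omega
        have hci : c ≤ s i := hmono i ⟨k, hkn⟩ (by simpa [Fin.le_def] using hik)
        have h1t : 0 ≤ 1 - t i := by linarith [ht1 i]
        nlinarith [mul_le_mul_of_nonneg_left hci h1t]
      calc ∑ i ∈ F, t i * s i ≤ ∑ i ∈ F, (s i - c * (1 - t i)) := Finset.sum_le_sum hterm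
        _ = ∑ i ∈ F, s i - c * ((k:ℝ) - ∑ i ∈ F, t i) := by
            rw [Finset.sum_sub_distrib, ← Finset.mul_sum, Finset.sum_sub_distrib]
            simp [hcard, mul_sub]
    have h3 : c * ∑ i ∈ Fᶜ, t i ≤ c * ((k : ℝ) - ∑ i ∈ F, t i) := by
      apply mul_le_mul_of_nonneg_left _ hc0
      have hcompl : ∑ i ∈ Fᶜ, t i = ∑ i, t i - ∑ i ∈ F, t i := by linarith [htsplit]
      linarith
    linarith

lemma rdiag_mul_transpose (σ : ℕ → ℝ) (hσ0 : ∀ i, min n m ≤ i → σ i = 0) :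
    rdiag n m σ * (rdiag n m σ)ᵀ
      = Matrix.of (fun i j : Fin n => if i = j then σ (i : ℕ) ^ 2 else 0) := by
  ext i j
  simp only [mul_apply, transpose_apply, of_apply, rdiag]
  by_cases hij : i = j
  · subst hij
    rw [if_pos rfl]
    by_cases him : (i : ℕ) < m
    · rw [Finset.sum_eq_single (⟨(i : ℕ), him⟩ : Fin m)]
      · simp [sq]
      · intro l _ hl
        have hne : (i : ℕ) ≠ (l : ℕ) := fun h => hl (by apply Fin.ext; simp [← h])
        simp [hne]
      · intro h; exact absurd (Finset.mem_univ _) h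
    · have hz : σ (i : ℕ) = 0 := hσ0 _ (le_trans (min_le_right n m) (not_lt.mp him))
      rw [hz]
      rw [Finset.sum_eq_zero]
      · ring
      · intro l _
        have hne : (i : ℕ) ≠ (l : ℕ) := by omega
        simp [hne]
  · rw [if_neg hij, Finset.sum_eq_zero]
    intro l _
    by_cases h1 : (i : ℕ) = (l : ℕ)
    · have h2 : ¬ (j : ℕ) = (l : ℕ) := fun h2 => hij (Fin.ext (by omega))
      simp [h2]
    · simp [h1]

lemma trace_mul_diagonal (P : Matrix (Fin n) (Fin n) ℝ) (d : Fin n → ℝ) :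
    (P * Matrix.of (fun i j : Fin n => if i = j then d i else 0)).trace = ∑ i, P i i * d i := by
  rw [Matrix.trace]
  refine Finset.sum_congr rfl fun i _ => ?_
  rw [Matrix.diag_apply, mul_apply, Finset.sum_eq_single i]
  · simp
  · intro l _ hl; simp [hl]
  · intro h; exact absurd (Finset.mem_univ _) h

lemma symIdem_diag_eq_sum_sq (P : Matrix (Fin n) (Fin n) ℝ) (hs : Pᵀ = P) (hi : P * P = P)
    (i : Fin n) : P i i = ∑ l, (P i l) ^ 2 := by
  conv_lhs => rw [← hi]
  rw [mul_apply]
  refine Finset.sum_congr rfl fun l _ => ?_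
  have h : P l i = P i l := by conv_rhs => rw [← hs, transpose_apply]
  rw [h, sq]

lemma symIdem_diag_nonneg (P : Matrix (Fin n) (Fin n) ℝ) (hs : Pᵀ = P) (hi : P * P = P)
    (i : Fin n) : 0 ≤ P i i := by
  rw [symIdem_diag_eq_sum_sq P hs hi i]
  exact Finset.sum_nonneg fun l _ => sq_nonneg _

lemma symIdem_diag_le_one (P : Matrix (Fin n) (Fin n) ℝ) (hs : Pᵀ = P) (hi : P * P = P)
    (i : Fin n) : P i i ≤ 1 := by
  have hs' : (1 - P)ᵀ = 1 - P := by rw [Matrix.transpose_sub, Matrix.transpose_one, hs]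
  have hi' : (1 - P) * (1 - P) = 1 - P := by
    rw [Matrix.sub_mul, Matrix.one_mul, Matrix.mul_sub, hi, Matrix.mul_one]
    abel
  have hnn := symIdem_diag_nonneg _ hs' hi' i
  have h1 : (1 - P) i i = 1 - P i i := by
    simp [Matrix.sub_apply, Matrix.one_apply_eq]
  linarith [h1 ▸ hnn]

end WLRMaux


open WLRMaux

/-- for a symmetric positive definite `K` with symmetric square root
`K^{1/2}`, the matrix `M_k⋆ = (K^{1/2})⁻¹ P'_k K^{1/2} Y X†` (with `P'_k` the
projector onto the top `k` left singular vectors of `Z' = K^{1/2} Y X† X`)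
minimizes the weighted Frobenius norm `‖K^{1/2}(Y − M X)‖_F` over matrices `M`
of rank at most `k`. -/
theorem weighted_low_rank_minimizer {n m k : ℕ}
    (K Ksq : Matrix (Fin n) (Fin n) ℝ) (hK : K.PosDef)
    (hKsq_symm : Ksqᵀ = Ksq) (hKsq : Ksq * Ksq = K) (hKsq_pd : Ksq.PosDef)
    (X Y : Matrix (Fin n) (Fin m) ℝ) (Xd : Matrix (Fin m) (Fin n) ℝ)
    (hXd : IsMoorePenrose X Xd)
    (Uz : Matrix (Fin n) (Fin n) ℝ) (Vz : Matrix (Fin m) (Fin m) ℝ) (σ : ℕ → ℝ)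
    (hSVD : IsSVDecomp (Ksq * Y * Xd * X) Uz Vz σ)
    (Pk : Matrix (Fin n) (Fin n) ℝ) (hPk : Pk = Uz * dproj n k * Uzᵀ)
    (Mk : Matrix (Fin n) (Fin n) ℝ) (hMk : Mk = Ksq⁻¹ * Pk * Ksq * Y * Xd) :
    Mk.rank ≤ k ∧
    ∀ M : Matrix (Fin n) (Fin n) ℝ, M.rank ≤ k →
      frob (Ksq * (Y - Mk * X)) ≤ frob (Ksq * (Y - M * X)) := by
  obtain ⟨hX1, hX2, hX3, hX4⟩ := hXd
  obtain ⟨hU1, hU2, hV1, hV2, hσpos, hσmono, hσ0, hZeq⟩ := hSVD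
  set D := rdiag n m σ with hD
  set Z := Ksq * Y * Xd * X with hZ
  set G := dproj n k with hGdef
  -- facts about G
  have hGs : Gᵀ = G := by
    ext i j
    simp only [transpose_apply, hGdef, dproj, of_apply]
    by_cases h : i = j
    · subst h; rfl
    · rw [if_neg (fun hc => h hc.1.symm), if_neg (fun hc => h hc.1)]
  have hGi : G * G = G := by
    ext i j
    simp only [mul_apply, hGdef, dproj, of_apply]
    rw [Finset.sum_eq_single i]
    · by_cases h1 : i = j
      · subst h1
        by_cases h2 : (i : ℕ) < k <;> simp [h2]
      · by_cases h2 : (i : ℕ) < k <;> simp [h1, h2]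
    · intro l _ hl
      rw [if_neg (fun hc => hl hc.1.symm), zero_mul]
    · intro h; exact absurd (Finset.mem_univ _) h
  -- rank part
  have hrankMk : Mk.rank ≤ k := by
    set E : Matrix (Fin n) (Fin k) ℝ :=
      Matrix.of (fun i j => if (i : ℕ) = (j : ℕ) then (1 : ℝ) else 0) with hE
    have hGE : G = E * Eᵀ := by
      ext i j
      simp only [mul_apply, transpose_apply, hE, hGdef, dproj, of_apply]
      by_cases hik : (i : ℕ) < k
      · rw [Finset.sum_eq_single (⟨(i : ℕ), hik⟩ : Fin k)]
        · by_cases hij : i = j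
          · subst hij; simp [hik]
          · have h2 : ¬ (j : ℕ) = (i : ℕ) := fun hc => hij (Fin.ext (by omega))
            simp [h2, hij]
        · intro l _ hl
          have hne : ¬ (i : ℕ) = (l : ℕ) := fun h => hl (by apply Fin.ext; simp [← h])
          simp [hne]
        · intro h; exact absurd (Finset.mem_univ _) h
      · rw [if_neg (fun hc => hik hc.2), Finset.sum_eq_zero]
        intro l _
        have hne : ¬ (i : ℕ) = (l : ℕ) := by omega
        simp [hne]
    calc Mk.rank = (Ksq⁻¹ * Pk * Ksq * Y * Xd).rank := by rw [hMk]
      _ ≤ (Ksq⁻¹ * Pk * Ksq * Y).rank := Matrix.rank_mul_le_left _ _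
      _ ≤ (Ksq⁻¹ * Pk * Ksq).rank := Matrix.rank_mul_le_left _ _
      _ ≤ (Ksq⁻¹ * Pk).rank := Matrix.rank_mul_le_left _ _
      _ ≤ Pk.rank := Matrix.rank_mul_le_right _ _
      _ = (Uz * G * Uzᵀ).rank := by rw [hPk]
      _ ≤ (Uz * G).rank := Matrix.rank_mul_le_left _ _
      _ ≤ G.rank := Matrix.rank_mul_le_right _ _
      _ = (E * Eᵀ).rank := by rw [hGE]
      _ ≤ E.rank := Matrix.rank_mul_le_left _ _
      _ ≤ k := by simpa using Matrix.rank_le_card_width E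
  refine ⟨hrankMk, ?_⟩
  intro M hM
  -- reduction via pseudoinverse
  have hQs : (Xd * X)ᵀ = Xd * X := hX4
  have hQi : (Xd * X) * (Xd * X) = Xd * X := by
    rw [← Matrix.mul_assoc, Matrix.mul_assoc Xd X Xd, ← Matrix.mul_assoc, hX2]
  have hXQ : ∀ N : Matrix (Fin n) (Fin n) ℝ, Ksq * N * X * (Xd * X) = Ksq * N * X := by
    intro N
    rw [Matrix.mul_assoc (Ksq * N) X (Xd * X), ← Matrix.mul_assoc X Xd X, hX1]
  have hreduce : ∀ N : Matrix (Fin n) (Fin n) ℝ,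
      frobSq (Ksq * (Y - N * X))
        = frobSq (Z - Ksq * N * X) + frobSq ((Ksq * Y) * (1 - Xd * X)) := by
    intro N
    have e1 : Ksq * (Y - N * X) = Ksq * Y - Ksq * N * X := by
      rw [Matrix.mul_sub, Matrix.mul_assoc]
    rw [e1, pyth_right (Xd * X) hQs hQi]
    congr 1
    · congr 1
      rw [Matrix.sub_mul, hXQ N]
      congr 1
      rw [hZ, Matrix.mul_assoc (Ksq * Y) Xd X]
    · congr 1
      rw [Matrix.sub_mul]
      have hz : Ksq * N * X * (1 - Xd * X) = 0 := by
        rw [Matrix.mul_sub, Matrix.mul_one, hXQ N, sub_self]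
      rw [hz, sub_zero]
  -- value at the minimizer
  have hKinv : Ksq * Ksq⁻¹ = 1 :=
    Matrix.mul_nonsing_inv _ (isUnit_iff_ne_zero.mpr hKsq_pd.det_pos.ne')
  have hMkX : Ksq * Mk * X = Pk * Z := by
    rw [hMk, hZ]
    simp only [← Matrix.mul_assoc]
    rw [hKinv, Matrix.one_mul]
  have hU2' : ∀ {p : ℕ} (A : Matrix (Fin n) (Fin p) ℝ), Uzᵀ * (Uz * A) = A := by
    intro p A; rw [← Matrix.mul_assoc, hU2, Matrix.one_mul]
  have hU1' : ∀ {p : ℕ} (A : Matrix (Fin n) (Fin p) ℝ), Uz * (Uzᵀ * A) = A := by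
    intro p A; rw [← Matrix.mul_assoc, hU1, Matrix.one_mul]
  -- diag facts
  have hDDt := rdiag_mul_transpose σ hσ0
  have hfrobD : frobSq D = ∑ i : Fin n, σ (i : ℕ) ^ 2 := by
    rw [frobSq_eq_trace', hD]
    rw [hDDt, Matrix.trace]
    simp [Matrix.diag_apply]
  have hfrob_symIdem : ∀ R : Matrix (Fin n) (Fin n) ℝ, Rᵀ = R → R * R = R →
      frobSq (R * D) = ∑ i : Fin n, R i i * σ (i : ℕ) ^ 2 := by
    intro R hRs hRi
    rw [frobSq_proj_left R hRs hRi, Matrix.trace_mul_comm, Matrix.mul_assoc, hD, hDDt,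
      trace_mul_diagonal]
  -- LHS value
  have h1Gs : (1 - G)ᵀ = 1 - G := by rw [Matrix.transpose_sub, Matrix.transpose_one, hGs]
  have h1Gi : (1 - G) * (1 - G) = 1 - G := by
    rw [Matrix.sub_mul, Matrix.one_mul, Matrix.mul_sub, hGi, Matrix.mul_one]
    abel
  have hlhs : frobSq (Z - Ksq * Mk * X) = ∑ i : Fin n, (1 - G) i i * σ (i : ℕ) ^ 2 := by
    have h1Pk : Z - Pk * Z = (1 - Pk) * Z := by
      rw [Matrix.sub_mul, Matrix.one_mul]
    rw [hMkX, h1Pk]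
    have hfac : (1 - Pk) * Z = Uz * ((1 - G) * D) * Vzᵀ := by
      rw [hPk, hZeq]
      simp only [Matrix.sub_mul, Matrix.mul_sub, Matrix.one_mul, Matrix.mul_one]
      simp only [Matrix.mul_assoc, hU2']
      try simp only [← Matrix.mul_assoc]
    rw [hfac, frobSq_mul_orth_right Vzᵀ (by rw [Matrix.transpose_transpose, hV2]),
      frobSq_mul_orth_left Uz hU2, hfrob_symIdem _ h1Gs h1Gi]
  -- RHS lower bound
  set B := Ksq * M * X with hB
  have hBrank : B.rank ≤ k :=
    le_trans (Matrix.rank_mul_le_left _ _)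
      (le_trans (Matrix.rank_mul_le_right _ _) hM)
  obtain ⟨P, hPs, hPi, hPB, hPtr⟩ := exists_proj k B hBrank
  set P' := Uzᵀ * P * Uz with hP'
  have hP's : P'ᵀ = P' := by
    rw [hP', Matrix.transpose_mul, Matrix.transpose_mul, Matrix.transpose_transpose, hPs,
      Matrix.mul_assoc]
  have hP'i : P' * P' = P' := by
    rw [hP']
    simp only [Matrix.mul_assoc, hU1']
    rw [← Matrix.mul_assoc P P Uz, hPi]
  have hP'tr : P'.trace ≤ (k : ℝ) := by
    rw [hP', Matrix.trace_mul_comm, ← Matrix.mul_assoc, hU1, Matrix.one_mul]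
    exact hPtr
  have hrhs : frobSq (Z - B) ≥ frobSq ((1 - P') * D) := by
    have step1 : frobSq (Z - B) ≥ frobSq ((1 - P) * (Z - B)) := by
      rw [pyth_left P hPs hPi (Z - B)]
      have := frobSq_nonneg (P * (Z - B))
      linarith
    have step2 : (1 - P) * (Z - B) = (1 - P) * Z := by
      rw [Matrix.mul_sub]
      have : (1 - P) * B = 0 := by
        rw [Matrix.sub_mul, Matrix.one_mul, hPB, sub_self]
      rw [this, sub_zero]
    have step3 : (1 - P) * Z = Uz * ((1 - P') * D) * Vzᵀ := by
      rw [hZeq, hP']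
      simp only [Matrix.sub_mul, Matrix.mul_sub, Matrix.one_mul, Matrix.mul_one]
      simp only [Matrix.mul_assoc, hU1']
      try simp only [← Matrix.mul_assoc]
    have step4 : frobSq (Uz * ((1 - P') * D) * Vzᵀ) = frobSq ((1 - P') * D) := by
      rw [frobSq_mul_orth_right Vzᵀ (by rw [Matrix.transpose_transpose, hV2]),
        frobSq_mul_orth_left Uz hU2]
    rw [step2, step3, step4] at step1
    exact step1
  -- majorization
  have hmaj : ∑ i : Fin n, P' i i * σ (i : ℕ) ^ 2
      ≤ ∑ i ∈ Finset.univ.filter (fun i : Fin n => (i : ℕ) < k), σ (i : ℕ) ^ 2 := by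
    apply major (fun i : Fin n => σ (i : ℕ) ^ 2) (fun i => P' i i)
    · intro i; exact sq_nonneg _
    · intro i j hij
      exact pow_le_pow_left₀ (hσpos _) (hσmono _ _ hij) 2
    · intro i; exact symIdem_diag_nonneg P' hP's hP'i i
    · intro i; exact symIdem_diag_le_one P' hP's hP'i i
    · exact hP'tr
  have hsum_split : ∑ i : Fin n, (1 - G) i i * σ (i : ℕ) ^ 2
      = ∑ i : Fin n, σ (i : ℕ) ^ 2
        - ∑ i ∈ Finset.univ.filter (fun i : Fin n => (i : ℕ) < k), σ (i : ℕ) ^ 2 := by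
    rw [Finset.sum_filter, ← Finset.sum_sub_distrib]
    refine Finset.sum_congr rfl fun i _ => ?_
    have hGd : G i i = if (i : ℕ) < k then 1 else 0 := by
      simp only [hGdef, dproj, of_apply]
      by_cases h : (i : ℕ) < k <;> simp [h]
    have h1G : (1 - G) i i = 1 - G i i := by simp [Matrix.sub_apply, Matrix.one_apply_eq]
    rw [h1G, hGd]
    by_cases h : (i : ℕ) < k <;> simp [h]
  -- put it together
  have hP'D : frobSq ((1 - P') * D) = frobSq D - frobSq (P' * D) := by
    have := pyth_left P' hP's hP'i D
    linarith
  have hcore : frobSq (Z - Ksq * Mk * X) ≤ frobSq (Z - Ksq * M * X) := by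
    rw [hlhs]
    have hPD : frobSq (P' * D) = ∑ i : Fin n, P' i i * σ (i : ℕ) ^ 2 :=
      hfrob_symIdem P' hP's hP'i
    have : frobSq ((1 - P') * D) ≥ ∑ i : Fin n, (1 - G) i i * σ (i : ℕ) ^ 2 := by
      rw [hP'D, hPD, hfrobD, hsum_split]
      linarith
    calc ∑ i : Fin n, (1 - G) i i * σ (i : ℕ) ^ 2 ≤ frobSq ((1 - P') * D) := this
      _ ≤ frobSq (Z - B) := hrhs
      _ = frobSq (Z - Ksq * M * X) := by rw [hB]
  apply frob_le_frob
  rw [hreduce Mk, hreduce M]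
  linarith
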